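/- Let ψ be a monotone flow on an ordered space Y. Suppose p is a periodic point of minimal period r > 0 and q is a periodic point of minimal period s > 0, with p ≺ q, and suppose it is not the case that every point of the orbit of p is strictly below every point of the orbit of q. Then r/s is rational. -/

import Mathlib

/-- If `p ≺ q` are periodic points of minimal periods `r`, `s` for a monotone
flow and `O(p) ≺ O(q)` fails, then `r/s` is rational. -/
theorem ratio_rational_of_not_orbit_lt
    {Y : Type*} [TopologicalSpace Y] [PartialOrder Y] [OrderClosedTopology Y]
    (φ : ℝ → Y → Y)
    (hcont : Continuous fun z : ℝ × Y => φ z.1 z.2)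
    (hzero : ∀ x, φ 0 x = x)
    (hadd : ∀ s t x, φ (s + t) x = φ s (φ t x))
    (hmono : ∀ t : ℝ, Monotone (φ t))
    (p q : Y) (r s : ℝ)
    (hrp : IsLeast {t : ℝ | 0 < t ∧ φ t p = p} r)
    (hsq : IsLeast {t : ℝ | 0 < t ∧ φ t q = q} s)
    (hpq : p < q)
    (hnot : ¬ ∀ a b : ℝ, φ a p < φ b q) :
    ∃ m : ℚ, (r / s : ℝ) = (m : ℝ) := by
  have hinj : ∀ t : ℝ, Function.Injective (φ t) := by
    intro t x y h
    have hx : φ (-t) (φ t x) = x := by rw [← hadd, neg_add_cancel, hzero]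
    have hy : φ (-t) (φ t y) = y := by rw [← hadd, neg_add_cancel, hzero]
    rw [← hx, ← hy, h]
  have hstrict : ∀ t : ℝ, ∀ {x y : Y}, x < y → φ t x < φ t y := by
    intro t x y hxy
    exact lt_of_le_of_ne (hmono t hxy.le) (fun h => hxy.ne (hinj t h))
  -- iterates of a period are periods
  have hiter : ∀ (t : ℝ) (x : Y), φ t x = x → ∀ n : ℤ, φ (n • t) x = x := by
    intro t x ht n
    have hneg : φ (-t) x = x := by
      conv_lhs => rw [← ht]
      rw [← hadd, neg_add_cancel, hzero]
    induction n using Int.induction_on with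
    | zero => simpa using hzero x
    | succ k ih =>
        have : ((k : ℤ) + 1) • t = t + (k : ℤ) • t := by
          rw [add_smul, one_smul, add_comm]
        rw [this, hadd, ih, ht]
    | pred k ih =>
        have : (-(k : ℤ) - 1) • t = -t + (-(k : ℤ)) • t := by
          rw [sub_smul, one_smul, sub_eq_neg_add]
        rw [this, hadd, ih, hneg]
  have hs0 : s ≠ 0 := ne_of_gt hsq.1.1
  -- extract c with ¬ (φ c p < q)
  push_neg at hnot
  obtain ⟨a, b, hab⟩ := hnot
  set c := a - b with hc
  have hcnot : ¬ φ c p < q := by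
    intro h
    have := hstrict b h
    rw [← hadd] at this
    have hba : b + c = a := by rw [hc]; ring
    rw [hba] at this
    exact hab this
  -- case φ c p = q : then r = s
  by_cases hceq : φ c p = q
  · have hset : {t : ℝ | 0 < t ∧ φ t q = q} = {t : ℝ | 0 < t ∧ φ t p = p} := by
      ext t
      simp only [Set.mem_setOf_eq, and_congr_right_iff]
      intro _
      constructor
      · intro h
        apply hinj c
        rw [← hadd, add_comm, hadd, hceq, h]
      · intro h
        rw [← hceq, ← hadd, add_comm, hadd, h]
    have : r = s := hrp.unique (hset ▸ hsq)
    exact ⟨1, by rw [this]; simp [hs0]⟩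
  -- every element of the subgroup generated by r and s lies in S
  have hG : ∀ g ∈ AddSubgroup.closure ({r, s} : Set ℝ), φ g p < q := by
    intro g hg
    rw [AddSubgroup.mem_closure_pair] at hg
    obtain ⟨m, n, rfl⟩ := hg
    rw [add_comm, hadd, hiter r p hrp.1.2 m]
    calc φ (n • s) p < φ (n • s) q := hstrict _ hpq
      _ = q := hiter s q hsq.1.2 n
  rcases AddSubgroup.dense_or_cyclic (AddSubgroup.closure ({r, s} : Set ℝ)) with hd | ⟨x, hx⟩
  · -- dense case : contradiction
    exfalso
    have hcmem : c ∈ closure ((AddSubgroup.closure ({r, s} : Set ℝ) : Set ℝ)) := by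
      rw [hd.closure_eq]; trivial
    obtain ⟨u, hu, hulim⟩ := mem_closure_iff_seq_limit.1 hcmem
    have hcont' : Continuous fun t : ℝ => φ t p :=
      hcont.comp (continuous_id.prodMk continuous_const)
    have hlim : Filter.Tendsto (fun n => φ (u n) p) Filter.atTop (nhds (φ c p)) :=
      (hcont'.tendsto c).comp hulim
    have hle : φ c p ≤ q := le_of_tendsto hlim
      (Filter.Eventually.of_forall fun n => (hG _ (hu n)).le)
    exact hcnot (lt_of_le_of_ne hle hceq)
  · -- cyclic case : r and s are integer multiples of x
    have hr : r ∈ AddSubgroup.closure ({x} : Set ℝ) := by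
      rw [← hx]; exact AddSubgroup.subset_closure (by simp)
    have hsmem : s ∈ AddSubgroup.closure ({x} : Set ℝ) := by
      rw [← hx]; exact AddSubgroup.subset_closure (by simp)
    rw [AddSubgroup.mem_closure_singleton] at hr hsmem
    obtain ⟨m, hm⟩ := hr
    obtain ⟨n, hn⟩ := hsmem
    have hn0 : n ≠ 0 := by
      rintro rfl
      exact hs0 (by rw [← hn, zero_smul])
    have hx0 : x ≠ 0 := by
      intro h
      apply hs0
      rw [← hn, h, smul_zero]
    refine ⟨(m : ℚ) / (n : ℚ), ?_⟩
    rw [← hm, ← hn, zsmul_eq_mul, zsmul_eq_mul, mul_div_mul_right _ _ hx0]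
    push_cast
    ring
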